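/- For any finite multiset M of positive integers, the identity Σ_{T∈𝒯_M} x_1^{oleaf(T)} x_2^{yleaf(T)} y_1^{oint(T)} y_2^{yint(T)} = Σ_{T∈𝒜_M} (x_1 y_1)^{oleaf(T)} (x_2 + y_2)^{yleaf(T)} holds in the polynomial ring ℤ[x_1, x_2, y_1, y_2], where 𝒜_M = {T ∈ 𝒯_M : yint(T) = 0}. -/

import Mathlib

/-- Labeled plane trees: a node with a label in `ℕ` and a (left-to-right ordered)
list of children. -/
inductive LTree : Type where
  | node : ℕ → List LTree → LTree

namespace LTree

/-- The label of the root. -/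
def label : LTree → ℕ
  | node a _ => a

/-- The list of children of the root, from left to right. -/
def children : LTree → List LTree
  | node _ cs => cs

/-- A tree consisting of a single node is a leaf. -/
def isLeaf (t : LTree) : Bool := t.children.isEmpty

/-- The list of all subtrees (i.e. all nodes) of a tree. -/
def subtrees : LTree → List LTree
  | node a cs => node a cs :: (cs.attach.map (fun c => subtrees c.1)).flatten
decreasing_by
  simp only [LTree.node.sizeOf_spec]
  have := List.sizeOf_lt_of_mem c.2
  omega

/-- The multiset of labels of all nodes of a tree. -/
def labels (T : LTree) : Multiset ℕ := (T.subtrees.map label : List ℕ)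

/-- `T` is a weakly increasing tree on the multiset `M`: the root is labeled `0`,
the multiset of labels is `M ∪ {0}`, labels weakly increase along root-to-leaf paths,
and the labels of the children of each node weakly increase from right to left. -/
def IsWIT (M : Multiset ℕ) (T : LTree) : Prop :=
  T.label = 0 ∧ T.labels = 0 ::ₘ M ∧
  ∀ t ∈ T.subtrees, (∀ c ∈ t.children, t.label ≤ c.label) ∧
    List.Chain' (fun a b => b ≤ a) (t.children.map label)

/-- `T` is (an encoding of) a plane tree with `n` edges: all labels are zero
and there are `n + 1` nodes. -/
def IsPlane (n : ℕ) (T : LTree) : Prop :=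
  (∀ t ∈ T.subtrees, t.label = 0) ∧ T.subtrees.length = n + 1

/-- The number of singleton leaves: leaves that are the only child of their parent. -/
def sleaf (T : LTree) : ℕ :=
  T.subtrees.countP (fun t => match t.children with
    | [c] => c.isLeaf
    | _ => false)

/-- The number of elder leaves: leaves that are the leftmost child of their parent
and have siblings. -/
def eleaf (T : LTree) : ℕ :=
  T.subtrees.countP (fun t => match t.children with
    | c :: _ :: _ => c.isLeaf
    | _ => false)

/-- The number of young leaves: leaves that are not the leftmost child of their parent. -/
def yleaf (T : LTree) : ℕ :=
  (T.subtrees.map (fun t => t.children.tail.countP isLeaf)).sum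

/-- The number of young internal nodes: internal nodes whose leftmost child is internal. -/
def yint (T : LTree) : ℕ :=
  T.subtrees.countP (fun t => match t.children with
    | c :: _ => !c.isLeaf
    | _ => false)

/-- The number of singleton internal nodes: parents of a singleton leaf. -/
def sint (T : LTree) : ℕ :=
  T.subtrees.countP (fun t => match t.children with
    | [c] => c.isLeaf
    | _ => false)

/-- The number of elder internal nodes: parents of an elder leaf. -/
def eint (T : LTree) : ℕ :=
  T.subtrees.countP (fun t => match t.children with
    | c :: _ :: _ => c.isLeaf
    | _ => false)

/-- The number of old leaves: leaves that are the leftmost child of their parent. -/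
def oleaf (T : LTree) : ℕ := sleaf T + eleaf T

/-- The number of old internal nodes. -/
def oint (T : LTree) : ℕ := sint T + eint T

end LTree

section Dev
namespace LTree

@[simp] lemma label_node (a : ℕ) (cs : List LTree) : (node a cs).label = a := rfl
@[simp] lemma children_node (a : ℕ) (cs : List LTree) : (node a cs).children = cs := rfl

lemma subtrees_node (a : ℕ) (cs : List LTree) :
    (node a cs).subtrees = node a cs :: (cs.map subtrees).flatten := by
  rw [subtrees]
  simp

lemma isLeaf_iff {t : LTree} : t.isLeaf = true ↔ t.children = [] := by
  simp [isLeaf, List.isEmpty_iff]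

lemma eq_of_isLeaf {t : LTree} (h : t.isLeaf = true) : t = node t.label [] := by
  cases t with
  | node a cs => cases (isLeaf_iff.1 h : cs = []); rfl

/-- custom induction principle -/
theorem myInd {P : LTree → Prop} (h : ∀ a cs, (∀ c ∈ cs, P c) → P (node a cs)) :
    ∀ t, P t
  | node a cs => h a cs (fun c hc => myInd h c)
decreasing_by
  simp only [LTree.node.sizeOf_spec]
  have := List.sizeOf_lt_of_mem hc
  omega

mutual
def deq : (t s : LTree) → Decidable (t = s)
  | .node a cs, .node b ds =>
    have h1 : Decidable (a = b) := Nat.decEq a b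
    have h2 : Decidable (cs = ds) := deqList cs ds
    decidable_of_iff (a = b ∧ cs = ds) (by simp)
def deqList : (l m : List LTree) → Decidable (l = m)
  | [], [] => isTrue rfl
  | [], _::_ => isFalse (by simp)
  | _::_, [] => isFalse (by simp)
  | c::l, d::m =>
    have h1 : Decidable (c = d) := deq c d
    have h2 : Decidable (l = m) := deqList l m
    decidable_of_iff (c = d ∧ l = m) (by simp)
end

instance : DecidableEq LTree := deq

/-- head-of-list is internal -/
def hInt : List LTree → Bool
  | c :: _ => !c.isLeaf
  | [] => false

/-- head-of-list is a leaf -/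
def hLeaf : List LTree → Bool
  | c :: _ => c.isLeaf
  | [] => false

@[simp] lemma hInt_nil : hInt [] = false := rfl
@[simp] lemma hInt_cons (c : LTree) (l : List LTree) : hInt (c :: l) = !c.isLeaf := rfl
@[simp] lemma hLeaf_nil : hLeaf [] = false := rfl
@[simp] lemma hLeaf_cons (c : LTree) (l : List LTree) : hLeaf (c :: l) = c.isLeaf := rfl

lemma hLeaf_append {l : List LTree} (h : l ≠ []) (l₂ : List LTree) :
    hLeaf (l ++ l₂) = hLeaf l := by
  cases l with
  | nil => exact absurd rfl h
  | cons c t => rfl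

lemma hInt_append {l : List LTree} (h : l ≠ []) (l₂ : List LTree) :
    hInt (l ++ l₂) = hInt l := by
  cases l with
  | nil => exact absurd rfl h
  | cons c t => rfl

/-- generic recursion for countP-statistics over subtrees -/
lemma countP_subtrees (p : LTree → Bool) (a : ℕ) (cs : List LTree) :
    (node a cs).subtrees.countP p
      = (cond (p (node a cs)) 1 0) + (cs.map (fun c => c.subtrees.countP p)).sum := by
  rw [subtrees_node, List.countP_cons, List.countP_flatten, List.map_map, Nat.add_comm]
  congr 1
  cases p (node a cs) <;> rfl

lemma sum_map_subtrees (f : LTree → ℕ) (a : ℕ) (cs : List LTree) :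
    ((node a cs).subtrees.map f).sum
      = f (node a cs) + (cs.map (fun c => (c.subtrees.map f).sum)).sum := by
  rw [subtrees_node]
  simp only [List.map_cons, List.sum_cons, List.map_flatten, List.sum_flatten, List.map_map]
  rfl

lemma yleaf_node (a : ℕ) (cs : List LTree) :
    yleaf (node a cs) = cs.tail.countP isLeaf + (cs.map yleaf).sum := by
  rw [yleaf, sum_map_subtrees]; rfl

lemma yint_node (a : ℕ) (cs : List LTree) :
    yint (node a cs) = (hInt cs).toNat + (cs.map yint).sum := by
  rw [yint, countP_subtrees]
  congr 1
  cases cs with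
  | nil => rfl
  | cons c t => cases h : c.isLeaf <;> simp [hInt, h]

/-- the combined old-leaf statistic -/
def olf (T : LTree) : ℕ := T.subtrees.countP (fun t => hLeaf t.children)

lemma olf_node (a : ℕ) (cs : List LTree) :
    olf (node a cs) = (hLeaf cs).toNat + (cs.map olf).sum := by
  rw [olf, countP_subtrees]
  congr 1

lemma oleaf_eq_olf (T : LTree) : oleaf T = olf T := by
  rw [oleaf, sleaf, eleaf, olf]
  induction T.subtrees with
  | nil => rfl
  | cons t l ih =>
    simp only [List.countP_cons]
    cases t with
    | node a cs =>
      rcases cs with _ | ⟨c, cs'⟩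
      · simpa using ih
      · rcases cs' with _ | ⟨c', cs''⟩ <;> cases h : c.isLeaf <;>
          simp only [children_node, hLeaf_cons, h] <;> simp <;> omega

lemma oint_eq_oleaf (T : LTree) : oint T = oleaf T := rfl

lemma labels_node (a : ℕ) (cs : List LTree) :
    labels (node a cs) = a ::ₘ (cs.map labels).sum := by
  rw [labels, subtrees_node, List.map_cons, label_node, ← Multiset.cons_coe]
  congr 1
  induction cs with
  | nil => simp
  | cons c t ih =>
    simp only [List.map_cons, List.flatten_cons, List.map_append, List.sum_cons, ← ih, ← Multiset.coe_add]
    rfl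

/-- the global ordering condition of weakly increasing trees -/
def Good (T : LTree) : Prop :=
  ∀ t ∈ T.subtrees, (∀ c ∈ t.children, t.label ≤ c.label) ∧
    List.Chain' (fun a b => b ≤ a) (t.children.map label)

lemma isWIT_iff {M : Multiset ℕ} {T : LTree} :
    IsWIT M T ↔ T.label = 0 ∧ T.labels = 0 ::ₘ M ∧ Good T := Iff.rfl

lemma good_node {a : ℕ} {cs : List LTree} :
    Good (node a cs) ↔ (∀ c ∈ cs, a ≤ c.label) ∧
      List.Chain' (fun x y => y ≤ x) (cs.map label) ∧ ∀ c ∈ cs, Good c := by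
  constructor
  · intro h
    have h0 := h (node a cs) (by rw [subtrees_node]; exact List.mem_cons_self)
    refine ⟨by simpa using h0.1, by simpa using h0.2, ?_⟩
    intro c hc t ht
    exact h t (by
      rw [subtrees_node]
      exact List.mem_cons_of_mem _ (List.mem_flatten.2 ⟨c.subtrees, List.mem_map_of_mem hc, ht⟩))
  · rintro ⟨h1, h2, h3⟩ t ht
    rw [subtrees_node, List.mem_cons] at ht
    rcases ht with rfl | ht
    · exact ⟨h1, h2⟩
    · rcases List.mem_flatten.1 ht with ⟨l, hl, htl⟩
      rcases List.mem_map.1 hl with ⟨c, hc, rfl⟩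
      exact h3 c hc t htl

end LTree
end Dev


section Dev2
namespace LTree

/-- one collapsing step on a children list -/
def step : List LTree → List LTree
  | .node b (d :: ds) :: rest => (d :: ds) ++ .node b [] :: rest
  | l => l

@[simp] lemma step_nil : step [] = [] := rfl
@[simp] lemma step_leaf_cons (b : ℕ) (rest : List LTree) :
    step (node b [] :: rest) = node b [] :: rest := rfl
@[simp] lemma step_int_cons (b : ℕ) (d : LTree) (ds rest : List LTree) :
    step (node b (d :: ds) :: rest) = (d :: ds) ++ node b [] :: rest := rfl

lemma step_append {l : List LTree} (h : l ≠ []) (l₂ : List LTree) :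
    step (l ++ l₂) = step l ++ l₂ := by
  match l with
  | .node b (d :: ds) :: rest => simp
  | .node b [] :: rest => simp
  | [] => exact absurd rfl h

lemma step_of_hLeaf {l : List LTree} (h : hLeaf l = true ∨ l = []) : step l = l := by
  rcases h with h | rfl
  · match l, h with
    | .node b cs :: rest, h =>
      rw [hLeaf_cons, isLeaf_iff] at h
      simp only [children_node] at h
      subst h
      simp
  · rfl

/-- the collapse map to tip-augmented trees -/
def F : LTree → LTree
  | node a cs => node a (step (cs.attach.map fun c => F c.1))
decreasing_by
  simp only [LTree.node.sizeOf_spec]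
  have := List.sizeOf_lt_of_mem c.2
  omega

lemma F_node (a : ℕ) (cs : List LTree) : F (node a cs) = node a (step (cs.map F)) := by
  rw [F]
  congr 1
  simp

@[simp] lemma F_label (t : LTree) : (F t).label = t.label := by
  cases t with
  | node a cs => rw [F_node]; rfl

@[simp] lemma F_leaf (b : ℕ) : F (node b []) = node b [] := by rw [F_node]; rfl

lemma step_ne_nil {l : List LTree} (h : l ≠ []) : step l ≠ [] := by
  match l with
  | .node b (d :: ds) :: rest => simp
  | .node b [] :: rest => simp
  | [] => exact absurd rfl h

lemma F_isLeaf (t : LTree) : (F t).isLeaf = t.isLeaf := by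
  cases t with
  | node a cs =>
    rw [F_node]
    cases cs with
    | nil => rfl
    | cons c cs' =>
      simp only [isLeaf, children_node, List.isEmpty_iff]
      have h1 : step (F c :: cs'.map F) ≠ [] := step_ne_nil (by simp)
      simp [h1]

/-- all marked variants of a (already expanded) children list;
a marked young leaf absorbs everything to its left. -/
def marksR : List LTree → List (List LTree)
  | [] => [[]]
  | e :: r => ((marksR r).map (· ++ [e])) ++
      (if e.isLeaf = true ∧ r ≠ [] then (marksR r).map (fun b => [LTree.node e.label b]) else [])

def marks (κ : List LTree) : List (List LTree) := marksR κ.reverse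

@[simp] lemma marks_nil : marks [] = [[]] := rfl

lemma marks_append (κ : List LTree) (e : LTree) :
    marks (κ ++ [e]) = ((marks κ).map (· ++ [e])) ++
      (if e.isLeaf = true ∧ κ ≠ [] then (marks κ).map (fun b => [LTree.node e.label b]) else []) := by
  rw [marks, List.reverse_append, List.reverse_singleton, List.singleton_append, marksR]
  rw [marks]
  congr 2
  simp

/-- recover the unmarked list from a marked list -/
def recov : List LTree → List LTree
  | [] => []
  | .node m [] :: rest => .node m [] :: rest
  | .node m (b₀ :: b) :: rest => recov (b₀ :: b) ++ .node m [] :: rest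

@[simp] lemma recov_nil : recov [] = [] := by simp [recov]
@[simp] lemma recov_leaf_cons (m : ℕ) (rest : List LTree) :
    recov (node m [] :: rest) = node m [] :: rest := by simp [recov]
@[simp] lemma recov_int_cons (m : ℕ) (b₀ : LTree) (b rest : List LTree) :
    recov (node m (b₀ :: b) :: rest) = recov (b₀ :: b) ++ node m [] :: rest := by simp [recov]

lemma recov_append {x : List LTree} (h : x ≠ []) (e : LTree) :
    recov (x ++ [e]) = recov x ++ [e] := by
  match x with
  | [] => exact absurd rfl h
  | .node m [] :: rest => simp
  | .node m (b₀ :: b) :: rest => simp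

/-- all preimages of a tip-augmented tree under `F` -/
def pre : LTree → List LTree
  | node a cs => (((cs.attach.map fun c => pre c.1).sections).flatMap marks).map (node a)
decreasing_by
  simp only [LTree.node.sizeOf_spec]
  have := List.sizeOf_lt_of_mem c.2
  omega

lemma pre_node (a : ℕ) (cs : List LTree) :
    pre (node a cs) = (((cs.map pre).sections).flatMap marks).map (node a) := by
  rw [pre]
  congr 2
  simp

@[simp] lemma pre_leaf (b : ℕ) : pre (node b []) = [node b []] := by
  rw [pre_node]
  rfl

/-- head of the list is a leaf, or the list is empty -/
def HeadLeaf : List LTree → Prop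
  | [] => True
  | c :: _ => c.isLeaf = true

@[simp] lemma headLeaf_nil : HeadLeaf [] := trivial
@[simp] lemma headLeaf_cons {c : LTree} {l : List LTree} : HeadLeaf (c :: l) ↔ c.isLeaf = true :=
  Iff.rfl

lemma headLeaf_append {l : List LTree} (h : l ≠ []) (l₂ : List LTree) :
    HeadLeaf (l ++ l₂) ↔ HeadLeaf l := by
  cases l with
  | nil => exact absurd rfl h
  | cons c t => exact Iff.rfl

end LTree
end Dev2


section Dev3
namespace LTree

lemma mem_marks_nil {x : List LTree} : x ∈ marks [] ↔ x = [] := by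
  simp [marks_nil]

lemma mem_marks_append {κ : List LTree} {e : LTree} {x : List LTree} :
    x ∈ marks (κ ++ [e]) ↔
      (∃ x' ∈ marks κ, x' ++ [e] = x) ∨
      (e.isLeaf = true ∧ κ ≠ [] ∧ ∃ b ∈ marks κ, [node e.label b] = x) := by
  rw [marks_append, List.mem_append]
  constructor
  · intro h
    rcases h with h | h
    · rcases List.mem_map.1 h with ⟨x', hx', rfl⟩
      exact Or.inl ⟨x', hx', rfl⟩
    · split at h
      · rcases List.mem_map.1 h with ⟨b, hb, rfl⟩
        rename_i hcond
        exact Or.inr ⟨hcond.1, hcond.2, b, hb, rfl⟩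
      · exact absurd h (List.not_mem_nil)
  · intro h
    rcases h with ⟨x', hx', rfl⟩ | ⟨h1, h2, b, hb, rfl⟩
    · exact Or.inl (List.mem_map_of_mem hx')
    · right
      rw [if_pos ⟨h1, h2⟩]
      exact List.mem_map_of_mem hb

lemma mem_marks_ne_nil {κ x : List LTree} (hx : x ∈ marks κ) (hκ : κ ≠ []) : x ≠ [] := by
  induction κ using List.reverseRecOn with
  | nil => exact absurd rfl hκ
  | append_singleton κ' e ih =>
    rcases mem_marks_append.1 hx with ⟨x', _, rfl⟩ | ⟨_, _, b, _, rfl⟩ <;> simp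

lemma self_mem_marks (κ : List LTree) : κ ∈ marks κ := by
  induction κ using List.reverseRecOn with
  | nil => simp [marks_nil]
  | append_singleton κ' e ih =>
    exact mem_marks_append.2 (Or.inl ⟨κ', ih, rfl⟩)

lemma mem_marks_insert {κ b : List LTree} (hb : b ∈ marks κ) (hκ : κ ≠ []) (m : ℕ) :
    ∀ cr : List LTree, (node m b :: cr) ∈ marks (κ ++ node m [] :: cr) := by
  intro cr
  induction cr using List.reverseRecOn with
  | nil =>
    have : (κ ++ [node m []]) = κ ++ [node m []] := rfl
    refine mem_marks_append.2 (Or.inr ⟨rfl, hκ, b, hb, ?_⟩)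
    rfl
  | append_singleton cr' e ih =>
    have heq : κ ++ node m [] :: (cr' ++ [e]) = (κ ++ node m [] :: cr') ++ [e] := by
      simp
    rw [heq]
    exact mem_marks_append.2 (Or.inl ⟨node m b :: cr', ih, rfl⟩)

lemma step_map_F_marks {κ : List LTree} (hL : HeadLeaf κ) :
    ∀ x ∈ marks κ, step (x.map F) = κ.map F := by
  induction κ using List.reverseRecOn with
  | nil => intro x hx; rw [mem_marks_nil.1 hx]; rfl
  | append_singleton κ' e ih =>
    intro x hx
    rcases mem_marks_append.1 hx with ⟨x', hx', rfl⟩ | ⟨he, hκ', b, hb, rfl⟩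
    · by_cases hκ' : κ' = []
      · subst hκ'
        rw [mem_marks_nil.1 hx']
        simp only [List.nil_append, List.map_cons, List.map_nil]
        apply step_of_hLeaf
        left
        rw [hLeaf_cons, F_isLeaf]
        exact (by simpa using hL : e.isLeaf = true)
      · have hx'ne : x' ≠ [] := mem_marks_ne_nil hx' hκ'
        have h1 : x'.map F ≠ [] := by simpa using hx'ne
        rw [List.map_append, step_append h1, ih ((headLeaf_append hκ' _).1 hL) x' hx',
          List.map_append]
    · have hbne : b ≠ [] := mem_marks_ne_nil hb hκ'
      have hstep : step (b.map F) = κ'.map F :=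
        ih ((headLeaf_append hκ' _).1 hL) b hb
      have hF : F (node e.label b) = node e.label (κ'.map F) := by
        rw [F_node, hstep]
      rcases hκ2 : κ'.map F with _ | ⟨d, ds⟩
      · exact absurd (by simpa using hκ2) hκ'
      · have hFe : F e = node e.label [] := by
          conv_lhs => rw [eq_of_isLeaf he]
          rw [F_leaf]
        rw [List.map_cons, List.map_nil, hF, hκ2, step_int_cons, List.map_append, ← hκ2,
          List.map_cons, List.map_nil, hFe]

lemma recov_marks {κ : List LTree} (hL : HeadLeaf κ) :
    ∀ x ∈ marks κ, recov x = κ := by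
  induction κ using List.reverseRecOn with
  | nil => intro x hx; rw [mem_marks_nil.1 hx]; exact recov_nil
  | append_singleton κ' e ih =>
    intro x hx
    rcases mem_marks_append.1 hx with ⟨x', hx', rfl⟩ | ⟨he, hκ', b, hb, rfl⟩
    · by_cases hκ' : κ' = []
      · subst hκ'
        rw [mem_marks_nil.1 hx', List.nil_append]
        have h2 : e = node e.label [] := eq_of_isLeaf (by simpa using hL)
        conv_lhs => rw [h2]
        rw [recov_leaf_cons, ← h2]
      · have hx'ne : x' ≠ [] := mem_marks_ne_nil hx' hκ'
        rw [recov_append hx'ne, ih ((headLeaf_append hκ' _).1 hL) x' hx']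
    · have hbne : b ≠ [] := mem_marks_ne_nil hb hκ'
      rcases hb2 : b with _ | ⟨b₀, b'⟩
      · exact absurd hb2 hbne
      · rw [recov_int_cons, ← hb2, ih ((headLeaf_append hκ' _).1 hL) b hb]
        congr 1
        conv_rhs => rw [eq_of_isLeaf he]

lemma getLast?_label_marks {κ : List LTree} :
    ∀ x ∈ marks κ, (x.map label).getLast? = (κ.map label).getLast? := by
  induction κ using List.reverseRecOn with
  | nil => intro x hx; rw [mem_marks_nil.1 hx]
  | append_singleton κ' e ih =>
    intro x hx
    rcases mem_marks_append.1 hx with ⟨x', hx', rfl⟩ | ⟨he, hκ', b, hb, rfl⟩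
    · simp [List.getLast?_concat]
    · simp [List.getLast?_concat]

lemma labsum_marks {κ : List LTree} :
    ∀ x ∈ marks κ, (x.map labels).sum = (κ.map labels).sum := by
  induction κ using List.reverseRecOn with
  | nil => intro x hx; rw [mem_marks_nil.1 hx]
  | append_singleton κ' e ih =>
    intro x hx
    rcases mem_marks_append.1 hx with ⟨x', hx', rfl⟩ | ⟨he, hκ', b, hb, rfl⟩
    · simp only [List.map_append, List.sum_append, ih x' hx']
    · simp only [List.map_cons, List.map_nil, List.sum_cons, List.sum_nil,
        List.map_append, List.sum_append]
      have hle : labels e = {e.label} := by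
        conv_lhs => rw [eq_of_isLeaf he]
        rw [labels_node]; simp
      rw [labels_node, ih b hb, hle, ← Multiset.singleton_add]
      rw [add_zero]
      exact add_comm _ _

lemma label_mem_marks {κ : List LTree} :
    ∀ x ∈ marks κ, ∀ t ∈ x, ∃ s ∈ κ, label t = label s := by
  induction κ using List.reverseRecOn with
  | nil =>
    intro x hx; rw [mem_marks_nil.1 hx]; intro t ht; exact absurd ht (List.not_mem_nil)
  | append_singleton κ' e ih =>
    intro x hx
    rcases mem_marks_append.1 hx with ⟨x', hx', rfl⟩ | ⟨he, hκ', b, hb, rfl⟩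
    · intro t ht
      rcases List.mem_append.1 ht with ht | ht
      · rcases ih x' hx' t ht with ⟨s, hs, hts⟩
        exact ⟨s, List.mem_append_left _ hs, hts⟩
      · have ht' := List.mem_singleton.1 ht
        exact ⟨e, List.mem_append_right _ (List.mem_singleton_self e), by rw [ht']⟩
    · intro t ht
      obtain rfl : t = node e.label b := List.mem_singleton.1 ht
      exact ⟨e, List.mem_append_right _ (List.mem_singleton_self e), rfl⟩

lemma good_marks {κ : List LTree} (hG : ∀ t ∈ κ, Good t)
    (hC : List.Chain' (fun a b => b ≤ a) (κ.map label)) :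
    ∀ x ∈ marks κ, (∀ t ∈ x, Good t) ∧ List.Chain' (fun a b => b ≤ a) (x.map label) := by
  induction κ using List.reverseRecOn with
  | nil =>
    intro x hx; rw [mem_marks_nil.1 hx]
    exact ⟨fun t ht => absurd ht (List.not_mem_nil), List.isChain_nil⟩
  | append_singleton κ' e ih =>
    have hG' : ∀ t ∈ κ', Good t := fun t ht => hG t (List.mem_append_left _ ht)
    have hC' : List.Chain' (fun a b => b ≤ a) (κ'.map label) := by
      rw [List.map_append] at hC
      exact (List.isChain_append.1 hC).1
    have hlink : ∀ s ∈ κ', e.label ≤ s.label := by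
      intro s hs
      have : List.Pairwise (fun a b => b ≤ a) ((κ' ++ [e]).map label) := by
        replace hC := List.isChain_iff_pairwise.1 hC
        · exact hC
      rw [List.map_append, List.pairwise_append] at this
      exact this.2.2 (label s) (List.mem_map_of_mem hs) (label e) (by simp)
    intro x hx
    rcases mem_marks_append.1 hx with ⟨x', hx', rfl⟩ | ⟨he, hκ', b, hb, rfl⟩
    · rcases ih hG' hC' x' hx' with ⟨hGx', hCx'⟩
      constructor
      · intro t ht
        rcases List.mem_append.1 ht with ht | ht
        · exact hGx' t ht
        · rw [List.mem_singleton.1 ht]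
          exact hG e (List.mem_append_right _ (List.mem_singleton_self e))
      · rw [List.map_append]
        refine List.isChain_append.2 ?_
        refine ⟨hCx', List.isChain_singleton _, ?_⟩
        intro p hp q hq
        obtain rfl : q = e.label := by simpa [eq_comm] using hq
        rw [getLast?_label_marks x' hx'] at hp
        -- p is the last label of κ', so e.label ≤ p
        have hp' : p ∈ κ'.map label := List.mem_of_mem_getLast? hp
        rcases List.mem_map.1 hp' with ⟨s, hs, rfl⟩
        exact hlink s hs
    · rcases ih hG' hC' b hb with ⟨hGb, hCb⟩
      constructor
      · intro t ht
        obtain rfl : t = node e.label b := List.mem_singleton.1 ht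
        rw [good_node]
        refine ⟨?_, hCb, hGb⟩
        intro c hc
        rcases label_mem_marks b hb c hc with ⟨s, hs, hcs⟩
        rw [hcs]
        exact hlink s hs
      · exact List.isChain_singleton _

lemma olf_marks {κ : List LTree} (hL : HeadLeaf κ) :
    ∀ x ∈ marks κ, (hLeaf x).toNat + (x.map olf).sum = (hLeaf κ).toNat + (κ.map olf).sum := by
  induction κ using List.reverseRecOn with
  | nil => intro x hx; rw [mem_marks_nil.1 hx]
  | append_singleton κ' e ih =>
    intro x hx
    rcases mem_marks_append.1 hx with ⟨x', hx', rfl⟩ | ⟨he, hκ', b, hb, rfl⟩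
    · by_cases hκ' : κ' = []
      · subst hκ'; rw [mem_marks_nil.1 hx']
      · have hx'ne : x' ≠ [] := mem_marks_ne_nil hx' hκ'
        rw [hLeaf_append hx'ne, hLeaf_append hκ', List.map_append, List.map_append,
          List.sum_append, List.sum_append, ← Nat.add_assoc, ← Nat.add_assoc,
          ih ((headLeaf_append hκ' _).1 hL) x' hx']
    · have hbne : b ≠ [] := mem_marks_ne_nil hb hκ'
      have h1 : hLeaf [node e.label b] = false := by
        rcases hb2 : b with _ | ⟨b₀, b'⟩
        · exact absurd hb2 hbne
        · simp [isLeaf]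
      have h2 : olf e = 0 := by
        rw [eq_of_isLeaf he, olf_node]
        simp
      rw [h1, hLeaf_append hκ']
      have hLκ : hLeaf κ' = true := by
        rcases κ' with _ | ⟨c, t⟩
        · exact absurd rfl hκ'
        · rw [hLeaf_cons]
          exact (by simpa [List.cons_append] using hL : c.isLeaf = true)
      rw [hLκ]
      simp only [List.map_cons, List.map_nil, List.sum_cons, List.sum_nil, List.map_append,
        List.sum_append, olf_node]
      have := ih ((headLeaf_append hκ' _).1 hL) b hb
      rw [hLκ] at this
      rw [h2]
      simp only [Bool.toNat_false, Bool.toNat_true] at this ⊢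
      omega

lemma nodup_marks {κ : List LTree} (hL : HeadLeaf κ) : (marks κ).Nodup := by
  induction κ using List.reverseRecOn with
  | nil => simp [marks_nil]
  | append_singleton κ' e ih =>
    rw [marks_append, List.nodup_append]
    by_cases hκ' : κ' = []
    · subst hκ'
      simp [marks_nil]
    · have hL' : HeadLeaf κ' := (headLeaf_append hκ' _).1 hL
      refine ⟨(ih hL').map (by intro a b h; exact List.append_inj_left' h rfl), ?_, ?_⟩
      · split
        · exact (ih hL').map (by intro a b h; simpa using h)
        · exact List.nodup_nil
      · intro x hx1 y hx2 hxy
        rcases List.mem_map.1 hx1 with ⟨x', hx', rfl⟩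
        subst hxy
        have hx'ne : x' ≠ [] := mem_marks_ne_nil hx' hκ'
        split at hx2
        · rcases List.mem_map.1 hx2 with ⟨b, hb, hb2⟩
          have : (x' ++ [e]).length = 1 := by rw [← hb2]; rfl
          rcases x' with _ | ⟨c, t⟩
          · exact absurd rfl hx'ne
          · simp at this
        · exact absurd hx2 (List.not_mem_nil)

end LTree
end Dev3


section Dev4
namespace LTree

variable {R : Type*} [CommRing R]

/-- node weight -/
def Wt (u v : R) (T : LTree) : R := u ^ yleaf T * v ^ yint T

/-- children-list weight -/
def Vt (u v : R) (x : List LTree) : R :=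
  u ^ (x.tail.countP isLeaf) * v ^ ((hInt x).toNat) * ((x.map (Wt u v)).prod)

lemma prod_map_Wt (u v : R) (cs : List LTree) :
    (cs.map (Wt u v)).prod = u ^ (cs.map yleaf).sum * v ^ (cs.map yint).sum := by
  induction cs with
  | nil => simp
  | cons c t ih =>
    simp only [List.map_cons, List.prod_cons, List.sum_cons, pow_add, ih, Wt]
    ring

lemma Wt_node (u v : R) (a : ℕ) (cs : List LTree) : Wt u v (node a cs) = Vt u v cs := by
  rw [Wt, Vt, yleaf_node, yint_node, pow_add, pow_add, prod_map_Wt]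
  ring

lemma Wt_leaf (u v : R) {e : LTree} (h : e.isLeaf = true) : Wt u v e = 1 := by
  conv_lhs => rw [eq_of_isLeaf h]
  rw [Wt, yleaf_node, yint_node]
  simp

lemma Vt_append_singleton (u v : R) {x : List LTree} (hx : x ≠ []) (e : LTree) :
    Vt u v (x ++ [e]) = Vt u v x * (Wt u v e * u ^ (e.isLeaf).toNat) := by
  rcases x with _ | ⟨c, t⟩
  · exact absurd rfl hx
  · rw [Vt, Vt]
    simp only [List.cons_append, List.tail_cons, List.countP_append, List.map_append,
      List.prod_append, hInt_cons, List.map_cons, List.map_nil, List.prod_cons, List.prod_nil,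
      List.countP_cons, List.countP_nil]
    rw [pow_add]
    ring_nf
    congr 1
    · cases h : e.isLeaf <;> simp [h]

lemma Vt_single_mark (u v : R) {b : List LTree} (hb : b ≠ []) (m : ℕ) :
    Vt u v [node m b] = v * Vt u v b := by
  have h1 : (node m b).isLeaf = false := by
    rcases b with _ | ⟨c, t⟩
    · exact absurd rfl hb
    · simp [isLeaf]
  rw [Vt]
  simp only [List.map_cons, List.map_nil, List.prod_cons, List.prod_nil, List.tail_cons,
    List.countP_nil, hInt_cons, h1]
  rw [Wt_node u v m b]
  simp

lemma Vt_sum (u v : R) {κ : List LTree} (hL : HeadLeaf κ) :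
    ((marks κ).map (Vt u v)).sum
      = (u + v) ^ (κ.tail.countP isLeaf) * ((κ.map (Wt u v)).prod) := by
  induction κ using List.reverseRecOn with
  | nil => simp [marks_nil, Vt]
  | append_singleton κ' e ih =>
    by_cases hκ' : κ' = []
    · subst hκ'
      have he : e.isLeaf = true := by simpa using hL
      rw [marks_append, if_neg (by simp), marks_nil]
      simp only [List.map_cons, List.map_nil, List.append_nil, List.nil_append, List.sum_cons,
        List.sum_nil, List.tail_cons, List.prod_cons, List.prod_nil, List.countP_nil]
      rw [Vt]
      simp [he]
    · have hL' : HeadLeaf κ' := (headLeaf_append hκ' _).1 hL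
      have hS := ih hL'
      rw [marks_append, List.map_append, List.sum_append, List.map_map]
      have h1 : (marks κ').map (Vt u v ∘ (· ++ [e]))
          = (marks κ').map (fun x => Vt u v x * (Wt u v e * u ^ (e.isLeaf).toNat)) := by
        apply List.map_congr_left
        intro x hx
        exact Vt_append_singleton u v (mem_marks_ne_nil hx hκ') e
      rw [h1, List.sum_map_mul_right, hS]
      have htail : (κ' ++ [e]).tail.countP isLeaf
          = κ'.tail.countP isLeaf + (e.isLeaf).toNat := by
        rcases κ' with _ | ⟨c, t⟩
        · exact absurd rfl hκ'
        · simp only [List.cons_append, List.tail_cons, List.countP_append, List.countP_cons,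
            List.countP_nil]
          cases h : e.isLeaf <;> simp [h]
      rw [htail, List.map_append, List.prod_append]
      simp only [List.map_cons, List.map_nil, List.prod_cons, List.prod_nil]
      by_cases he : e.isLeaf = true
      · rw [if_pos ⟨he, hκ'⟩, List.map_map]
        have h2 : (marks κ').map (Vt u v ∘ fun b => [node e.label b])
            = (marks κ').map (fun b => v * Vt u v b) := by
          apply List.map_congr_left
          intro b hb
          exact Vt_single_mark u v (mem_marks_ne_nil hb hκ') e.label
        rw [h2, List.sum_map_mul_left, hS, Wt_leaf u v he, he]
        rw [pow_add]
        simp only [Bool.toNat_true, pow_one]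
        ring
      · rw [if_neg (by tauto)]
        simp only [List.map_nil, List.sum_nil, add_zero]
        rw [(by simp [he] : e.isLeaf = false), pow_add]
        simp only [Bool.toNat_false, pow_zero, mul_one]
        ring

/-- sections of lists of nodup lists are nodup -/
lemma nodup_sections {α : Type*} {L : List (List α)} (h : ∀ l ∈ L, l.Nodup) :
    L.sections.Nodup := by
  induction L with
  | nil => simp [List.sections]
  | cons l L ih =>
    have hsec : (l :: L).sections = (L.sections).flatMap fun s => l.map (· :: s) := rfl
    rw [hsec, List.nodup_flatMap]
    constructor
    · intro s hs
      exact (h l (List.mem_cons_self)).map (fun a b hab => by simpa using hab)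
    · have hN : L.sections.Nodup := ih (fun l' hl' => h l' (List.mem_cons_of_mem _ hl'))
      have hd : ∀ s s' : List α, s ≠ s' → List.Disjoint (l.map (· :: s)) (l.map (· :: s')) := by
        intro s s' hne x hx hx'
        rcases List.mem_map.1 hx with ⟨a, _, rfl⟩
        rcases List.mem_map.1 hx' with ⟨a', _, h2⟩
        simp only [List.cons.injEq] at h2
        exact hne h2.2.symm
      exact hN.imp (fun hab => hd _ _ hab)

lemma sum_sections_prod {α : Type*} (f : α → R) (L : List (List α)) :
    ((L.sections).map (fun κ => (κ.map f).prod)).sum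
      = (L.map (fun l => (l.map f).sum)).prod := by
  induction L with
  | nil => simp [List.sections]
  | cons l L ih =>
    have hsec : (l :: L).sections = (L.sections).flatMap fun s => l.map (· :: s) := rfl
    rw [hsec, List.map_cons, List.prod_cons, ← ih, List.map_flatMap]
    rw [List.flatMap_def, List.sum_flatten, List.map_map]
    simp only [List.map_map]
    have h3 : L.sections.map (List.sum ∘ fun s => l.map ((fun κ => (κ.map f).prod) ∘ (· :: s)))
        = L.sections.map (fun s => (l.map f).sum * ((s.map f).prod)) := by
      apply List.map_congr_left
      intro s _
      show (l.map ((fun κ => (κ.map f).prod) ∘ (· :: s))).sum = _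
      have h4 : l.map ((fun κ => (κ.map f).prod) ∘ (· :: s)) = l.map (fun a => f a * (s.map f).prod) := by
        apply List.map_congr_left
        intro a _
        simp
      rw [h4, List.sum_map_mul_right]
    rw [h3, List.sum_map_mul_left]

end LTree
end Dev4


section Dev5
namespace LTree

lemma step_labels : ∀ l : List LTree, ((step l).map labels).sum = (l.map labels).sum := by
  intro l
  match l with
  | [] => rfl
  | .node b [] :: rest => rfl
  | .node b (d :: ds) :: rest =>
    simp only [step_int_cons, List.map_append, List.sum_append, List.map_cons, List.sum_cons,
      labels_node, List.map_nil, List.sum_nil]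
    rw [(rfl : (b ::ₘ 0) = ({b} : Multiset ℕ)), ← Multiset.singleton_add,
      ← Multiset.singleton_add]
    abel

lemma F_labels : ∀ T, labels (F T) = labels T := by
  apply myInd
  intro a cs ih
  rw [F_node, labels_node, labels_node, step_labels, List.map_map]
  congr 1
  apply congrArg
  apply List.map_congr_left
  intro c hc
  exact ih c hc

lemma map_label_map_F (cs : List LTree) : (cs.map F).map label = cs.map label := by
  rw [List.map_map]
  apply List.map_congr_left
  intro c _
  simp [F_label]

lemma good_leaf (b : ℕ) : Good (node b []) := by
  rw [good_node]
  refine ⟨by simp, List.isChain_nil, by simp⟩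

lemma step_good {l : List LTree} (hG : ∀ c ∈ l, Good c)
    (hC : List.Chain' (fun x y => y ≤ x) (l.map label)) :
    (∀ c ∈ step l, Good c) ∧ List.Chain' (fun x y => y ≤ x) ((step l).map label) ∧
      ∀ a : ℕ, (∀ c ∈ l, a ≤ c.label) → ∀ c ∈ step l, a ≤ c.label := by
  match l with
  | [] => exact ⟨hG, by simpa using hC, fun a h => h⟩
  | .node b [] :: rest => exact ⟨hG, by simpa using hC, fun a h => h⟩
  | .node b (d :: ds) :: rest =>
    have hGd := hG _ (List.mem_cons_self)
    rw [good_node] at hGd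
    obtain ⟨hd1, hd2, hd3⟩ := hGd
    simp only [List.map_cons, label_node] at hC
    have hCrest := (List.isChain_cons.1 hC).2
    have hblink := (List.isChain_cons.1 hC).1
    refine ⟨?_, ?_, ?_⟩
    · intro c hc
      rw [step_int_cons] at hc
      rcases List.mem_append.1 hc with hc | hc
      · exact hd3 c hc
      · rcases List.mem_cons.1 hc with rfl | hc
        · exact good_leaf b
        · exact hG c (List.mem_cons_of_mem _ hc)
    · rw [step_int_cons, List.map_append]
      refine List.isChain_append.2 ⟨hd2, ?_, ?_⟩
      · simp only [List.map_cons, label_node]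
        exact List.isChain_cons.2 ⟨hblink, hCrest⟩
      · intro x hx y hy
        simp only [List.map_cons, label_node, List.head?_cons, Option.mem_def,
          Option.some.injEq] at hy
        rcases hy with rfl
        rcases List.mem_map.1 (List.mem_of_mem_getLast? hx) with ⟨s, hs, rfl⟩
        exact hd1 s hs
    · intro a ha c hc
      rw [step_int_cons] at hc
      have hab : a ≤ b := by simpa using ha _ (List.mem_cons_self)
      rcases List.mem_append.1 hc with hc | hc
      · exact le_trans hab (hd1 c hc)
      · rcases List.mem_cons.1 hc with rfl | hc
        · simpa using hab
        · exact ha c (List.mem_cons_of_mem _ hc)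

lemma F_good : ∀ T, Good T → Good (F T) := by
  apply myInd
  intro a cs ih hG
  rw [good_node] at hG
  obtain ⟨h1, h2, h3⟩ := hG
  have hGm : ∀ c ∈ cs.map F, Good c := by
    intro c hc
    rcases List.mem_map.1 hc with ⟨c', hc', rfl⟩
    exact ih c' hc' (h3 c' hc')
  have hCm : List.Chain' (fun x y => y ≤ x) ((cs.map F).map label) := by
    rw [map_label_map_F]; exact h2
  obtain ⟨g1, g2, g3⟩ := step_good hGm hCm
  rw [F_node, good_node]
  refine ⟨?_, g2, g1⟩
  apply g3
  intro c hc
  rcases List.mem_map.1 hc with ⟨c', hc', rfl⟩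
  rw [F_label]
  exact h1 c' hc'

lemma yint_leaf (b : ℕ) : yint (node b []) = 0 := by
  rw [yint_node]; simp

lemma tipAug_node {a : ℕ} {cs : List LTree} :
    yint (node a cs) = 0 ↔ hInt cs = false ∧ ∀ c ∈ cs, yint c = 0 := by
  rw [yint_node]
  constructor
  · intro h
    have h1 : (hInt cs).toNat = 0 := by omega
    have h2 : (cs.map yint).sum = 0 := by omega
    refine ⟨by cases hx : hInt cs <;> simp_all, ?_⟩
    intro c hc
    exact List.sum_eq_zero_iff.1 h2 _ (List.mem_map_of_mem hc)
  · rintro ⟨h1, h2⟩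
    rw [h1]
    simp only [Bool.toNat_false, Nat.zero_add]
    apply List.sum_eq_zero
    intro x hx
    rcases List.mem_map.1 hx with ⟨c, hc, rfl⟩
    exact h2 c hc

lemma yint_F : ∀ T, yint (F T) = 0 := by
  apply myInd
  intro a cs ih
  rw [F_node, tipAug_node]
  have hκ : ∀ t ∈ cs.map F, yint t = 0 := by
    intro t ht
    rcases List.mem_map.1 ht with ⟨c, hc, rfl⟩
    exact ih c hc
  rcases hcs : cs.map F with _ | ⟨κ₀, rest⟩
  · simp
  · rcases κ₀ with ⟨b, _ | ⟨d, ds⟩⟩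
    · rw [step_leaf_cons]
      constructor
      · simp [isLeaf]
      · rw [← hcs]; exact hκ
    · have h0 : yint (node b (d :: ds)) = 0 := hκ _ (by rw [hcs]; exact List.mem_cons_self)
      rw [tipAug_node] at h0
      obtain ⟨h0a, h0b⟩ := h0
      rw [step_int_cons]
      constructor
      · simpa using h0a
      · intro c hc
        rcases List.mem_append.1 hc with hc | hc
        · exact h0b c hc
        · rcases List.mem_cons.1 hc with rfl | hc
          · exact yint_leaf b
          · exact hκ c (by rw [hcs]; exact List.mem_cons_of_mem _ hc)

/-- strengthen a Forall₂ with right membership -/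
lemma forall₂_strengthen {α β : Type*} {r s : α → β → Prop} :
    ∀ {l₁ : List α} {l₂ : List β}, List.Forall₂ r l₁ l₂ →
      (∀ a b, r a b → b ∈ l₂ → s a b) → List.Forall₂ s l₁ l₂ := by
  intro l₁ l₂ h
  induction h with
  | nil => intro _; exact List.Forall₂.nil
  | @cons a b l₁' l₂' hab h ih =>
    intro hs
    exact List.Forall₂.cons (hs _ _ hab (List.mem_cons_self))
      (ih fun a b hr hm => hs a b hr (List.mem_cons_of_mem _ hm))

lemma forall₂_map_eq {α β γ : Type*} {r : α → β → Prop} {l₁ : List α} {l₂ : List β}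
    (h : List.Forall₂ r l₁ l₂) (f : α → γ) (g : β → γ)
    (hp : ∀ a b, r a b → f a = g b) : l₁.map f = l₂.map g := by
  induction h with
  | nil => rfl
  | @cons a b l₁' l₂' hab h ih => simp only [List.map_cons, ih, hp a b hab]

lemma forall₂_mem_left {α β : Type*} {r : α → β → Prop} {l₁ : List α} {l₂ : List β}
    (h : List.Forall₂ r l₁ l₂) : ∀ a ∈ l₁, ∃ b ∈ l₂, r a b := by
  induction h with
  | nil => intro a ha; exact absurd ha (List.not_mem_nil)
  | @cons a b l₁' l₂' hab h ih =>
    intro x hx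
    rcases List.mem_cons.1 hx with rfl | hx
    · exact ⟨b, List.mem_cons_self, hab⟩
    · rcases ih x hx with ⟨y, hy, hxy⟩
      exact ⟨y, List.mem_cons_of_mem _ hy, hxy⟩

lemma forall₂_append_cons {α β : Type*} {r : α → β → Prop}
    {l₁ : List α} {l₂ : List β} (h : List.Forall₂ r l₁ l₂) {a : α} {b : β} (hab : r a b)
    {m₁ : List α} {m₂ : List β} (hm : List.Forall₂ r m₁ m₂) :
    List.Forall₂ r (l₁ ++ a :: m₁) (l₂ ++ b :: m₂) := by
  induction h with
  | nil => exact List.Forall₂.cons hab hm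
  | @cons x y l₁' l₂' hxy h ih => exact List.Forall₂.cons hxy ih

lemma countP_isLeaf_congr {l₁ l₂ : List LTree}
    (h : List.Forall₂ (fun t d => t.isLeaf = d.isLeaf) l₁ l₂) :
    l₁.countP isLeaf = l₂.countP isLeaf := by
  induction h with
  | nil => rfl
  | @cons a b l₁' l₂' hab h ih => simp only [List.countP_cons, ih, hab]

lemma forall₂_tail {α β : Type*} {r : α → β → Prop} {l₁ : List α} {l₂ : List β}
    (h : List.Forall₂ r l₁ l₂) : List.Forall₂ r l₁.tail l₂.tail := by
  cases h with
  | nil => exact List.Forall₂.nil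
  | cons _ h => exact h

end LTree
end Dev5


section Dev6
namespace LTree

/-- Everything preserved by taking preimages of a tip-augmented tree. -/
theorem pre_spec : ∀ A : LTree, yint A = 0 → ∀ T ∈ pre A,
    label T = label A ∧ isLeaf T = isLeaf A ∧ labels T = labels A ∧ olf T = olf A ∧
      F T = A ∧ (Good A → Good T) := by
  apply myInd
  intro a ds ih hA T hT
  obtain ⟨hA1, hA2⟩ := tipAug_node.1 hA
  rw [pre_node] at hT
  rcases List.mem_map.1 hT with ⟨x, hx, rfl⟩
  rcases List.mem_flatMap.1 hx with ⟨κ, hκsec, hxm⟩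
  have hκd : List.Forall₂ (fun t d => t ∈ pre d) κ ds :=
    List.forall₂_map_right_iff.1 (List.mem_sections.1 hκsec)
  have hP : List.Forall₂ (fun t d => label t = label d ∧ isLeaf t = isLeaf d ∧
      labels t = labels d ∧ olf t = olf d ∧ F t = d ∧ (Good d → Good t)) κ ds := by
    apply forall₂_strengthen hκd
    intro t d htd hd
    exact ih d hd (hA2 d hd) t htd
  -- derived facts
  have hFκ : κ.map F = ds := by
    have := forall₂_map_eq hP F id (fun t d h => h.2.2.2.2.1)
    simpa using this
  have hlabκ : κ.map label = ds.map label :=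
    forall₂_map_eq hP label label (fun t d h => h.1)
  have hlabelsκ : κ.map labels = ds.map labels :=
    forall₂_map_eq hP labels labels (fun t d h => h.2.2.1)
  have holfκ : κ.map olf = ds.map olf :=
    forall₂_map_eq hP olf olf (fun t d h => h.2.2.2.1)
  have hleafκ : List.Forall₂ (fun t d => t.isLeaf = d.isLeaf) κ ds :=
    List.Forall₂.imp (fun a b h => h.2.1) hP
  have hHL : HeadLeaf κ := by
    cases hleafκ with
    | nil => exact headLeaf_nil
    | @cons t d κ' ds' htd h =>
      rw [headLeaf_cons, htd]
      rw [hInt_cons] at hA1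
      simpa using hA1
  have hnil : κ = [] ↔ ds = [] := by
    constructor
    · intro h; subst h; cases hκd; rfl
    · intro h; subst h; cases hκd; rfl
  refine ⟨rfl, ?_, ?_, ?_, ?_, ?_⟩
  · -- isLeaf
    by_cases hds : ds = []
    · subst hds
      rw [mem_marks_nil.1 (by rwa [hnil.2 rfl] at hxm : x ∈ marks [])]
    · have hκne : κ ≠ [] := fun h => hds (hnil.1 h)
      have hxne : x ≠ [] := mem_marks_ne_nil hxm hκne
      rcases x with _ | _
      · exact absurd rfl hxne
      · rcases ds with _ | _
        · exact absurd rfl hds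
        · rfl
  · -- labels
    rw [labels_node, labels_node, labsum_marks x hxm, hlabelsκ]
  · -- olf
    rw [olf_node, olf_node]
    have := olf_marks hHL x hxm
    rw [holfκ] at this
    have hhl : hLeaf κ = hLeaf ds := by
      cases hleafκ with
      | nil => rfl
      | cons htd _ => simp [htd]
    rw [hhl] at this
    exact this
  · -- F
    rw [F_node, step_map_F_marks hHL x hxm, hFκ]
  · -- Good
    intro hGA
    rw [good_node] at hGA
    obtain ⟨hg1, hg2, hg3⟩ := hGA
    have hGκ : ∀ t ∈ κ, Good t := by
      intro t ht
      rcases forall₂_mem_left hP t ht with ⟨d, hd, hprops⟩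
      exact hprops.2.2.2.2.2 (hg3 d hd)
    have hCκ : List.Chain' (fun x y => y ≤ x) (κ.map label) := by
      rw [hlabκ]; exact hg2
    obtain ⟨gx1, gx2⟩ := good_marks hGκ hCκ x hxm
    rw [good_node]
    refine ⟨?_, gx2, gx1⟩
    intro c hc
    rcases label_mem_marks x hxm c hc with ⟨s, hs, hcs⟩
    rcases forall₂_mem_left hP s hs with ⟨d, hd, hprops⟩
    rw [hcs, hprops.1]
    exact hg1 d hd

end LTree
end Dev6


section Dev7
namespace LTree

/-- every tree is a preimage of its collapse -/
theorem mem_pre_F : ∀ T : LTree, T ∈ pre (F T) := by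
  apply myInd
  intro a cs ih
  rw [F_node, pre_node]
  apply List.mem_map_of_mem
  apply List.mem_flatMap.2
  rcases hκ : cs.map F with _ | ⟨κ₀, rest⟩
  · -- cs = []
    have hcs : cs = [] := by simpa using hκ
    subst hcs
    exact ⟨[], by simp [List.sections], by simp [marks_nil]⟩
  · rcases κ₀ with ⟨b, _ | ⟨d, ds'⟩⟩
    · -- head of collapsed list is a leaf: no further collapse
      refine ⟨cs, ?_, self_mem_marks cs⟩
      rw [step_leaf_cons, ← hκ]
      apply List.mem_sections.2
      rw [List.forall₂_map_right_iff, List.forall₂_map_right_iff]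
      exact List.forall₂_same.2 (fun c hc => ih c hc)
    · -- head of collapsed list is internal
      rcases cs with _ | ⟨c₀, cr⟩
      · simp at hκ
      · rw [List.map_cons, List.cons.injEq] at hκ
        obtain ⟨hc₀, hcr⟩ := hκ
        -- c₀ ∈ pre (F c₀) = pre (node b (d :: ds'))
        have h0 := ih c₀ (List.mem_cons_self)
        rw [hc₀, pre_node] at h0
        rcases List.mem_map.1 h0 with ⟨x₀, hx₀, hc₀eq⟩
        rcases List.mem_flatMap.1 hx₀ with ⟨κ₀', hκ₀sec, hx₀m⟩
        have hκ₀ne : κ₀' ≠ [] := by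
          intro h
          have := List.mem_sections_length hκ₀sec
          rw [h] at this
          simp at this
        have hlab : c₀.label = b := by
          have := F_label c₀
          rw [hc₀] at this
          simpa using this.symm
        refine ⟨κ₀' ++ node b [] :: cr, ?_, ?_⟩
        · rw [step_int_cons, ← hcr]
          apply List.mem_sections.2
          rw [List.map_append, List.map_cons]
          apply forall₂_append_cons
          · exact List.mem_sections.1 hκ₀sec
          · rw [pre_leaf]; exact List.mem_singleton_self _
          · rw [List.forall₂_map_right_iff, List.forall₂_map_right_iff]
            exact List.forall₂_same.2
              (fun c hc => ih c (List.mem_cons_of_mem _ hc))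
        · have hmm : node b x₀ :: cr ∈ marks (κ₀' ++ node b [] :: cr) :=
            mem_marks_insert hx₀m hκ₀ne b cr
          rwa [hc₀eq] at hmm

/-- preimage lists have no duplicates -/
theorem nodup_pre : ∀ A : LTree, yint A = 0 → (pre A).Nodup := by
  apply myInd
  intro a ds ih hA
  obtain ⟨hA1, hA2⟩ := tipAug_node.1 hA
  rw [pre_node]
  have hHL : ∀ κ ∈ (ds.map pre).sections, HeadLeaf κ := by
    intro κ hκsec
    have hκd : List.Forall₂ (fun t d => t ∈ pre d) κ ds :=
      List.forall₂_map_right_iff.1 (List.mem_sections.1 hκsec)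
    cases hκd with
    | nil => exact headLeaf_nil
    | @cons t d κ' ds' htd h =>
      rw [headLeaf_cons]
      have := (pre_spec d (hA2 d (List.mem_cons_self)) t htd).2.1
      rw [this]
      rw [hInt_cons] at hA1
      simpa using hA1
  apply List.Nodup.map
  · intro x y hxy
    simpa using hxy
  · rw [List.nodup_flatMap]
    constructor
    · intro κ hκ
      exact nodup_marks (hHL κ hκ)
    · have hsecnd : (ds.map pre).sections.Nodup := by
        apply nodup_sections
        intro l hl
        rcases List.mem_map.1 hl with ⟨d, hd, rfl⟩
        exact ih d hd (hA2 d hd)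
      apply hsecnd.imp_of_mem
      intro κ κ' hκ hκ' hne x hx hx'
      exact hne (by rw [← recov_marks (hHL _ hκ) x hx, ← recov_marks (hHL _ hκ') x hx'])

/-- the fiber weight sum -/
theorem pre_sum {R : Type*} [CommRing R] (u v : R) :
    ∀ A : LTree, yint A = 0 → ((pre A).map (Wt u v)).sum = (u + v) ^ yleaf A := by
  apply myInd
  intro a ds ih hA
  obtain ⟨hA1, hA2⟩ := tipAug_node.1 hA
  rw [pre_node, List.map_map]
  have h1 : (Wt u v ∘ node a) = Vt u v := by
    funext x
    exact Wt_node u v a x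
  rw [h1]
  rw [List.flatMap_def, List.map_flatten, List.sum_flatten, List.map_map, List.map_map]
  have h2 : ((ds.map pre).sections).map ((List.sum ∘ List.map (Vt u v)) ∘ marks)
      = ((ds.map pre).sections).map
          (fun κ => ((κ.map (Wt u v)).prod) * (u + v) ^ (ds.tail.countP isLeaf)) := by
    apply List.map_congr_left
    intro κ hκsec
    have hκd : List.Forall₂ (fun t d => t ∈ pre d) κ ds :=
      List.forall₂_map_right_iff.1 (List.mem_sections.1 hκsec)
    have hleafκ : List.Forall₂ (fun t d => t.isLeaf = d.isLeaf) κ ds := by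
      apply forall₂_strengthen hκd
      intro t d htd hd
      exact (pre_spec d (hA2 d hd) t htd).2.1
    have hHL : HeadLeaf κ := by
      cases hleafκ with
      | nil => exact headLeaf_nil
      | @cons t d κ' ds' htd h =>
        rw [headLeaf_cons, htd]
        rw [hInt_cons] at hA1
        simpa using hA1
    have htails : κ.tail.countP isLeaf = ds.tail.countP isLeaf :=
      countP_isLeaf_congr (forall₂_tail hleafκ)
    show ((marks κ).map (Vt u v)).sum = _
    rw [Vt_sum u v hHL, htails]
    ring
  rw [h2, List.sum_map_mul_right, sum_sections_prod (Wt u v) (ds.map pre), List.map_map]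
  have h4 : ds.map ((fun l => (l.map (Wt u v)).sum) ∘ pre)
      = ds.map (fun d => (u + v) ^ yleaf d) := by
    apply List.map_congr_left
    intro d hd
    exact ih d hd (hA2 d hd)
  have h5 : ∀ l : List LTree, (l.map (fun d => (u + v) ^ yleaf d)).prod
      = (u + v) ^ (l.map yleaf).sum := by
    intro l
    induction l with
    | nil => simp
    | cons c t iht => simp [pow_add, iht]
  rw [h4, h5, yleaf_node, pow_add]
  ring

end LTree
end Dev7



open MvPolynomial in
/-- **Theorem (reduction to tip-augmented weakly increasing trees).**
For any multiset `M` of positive integers,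
`Σ_{T ∈ 𝒯_M} x₁^{oleaf} x₂^{yleaf} y₁^{oint} y₂^{yint}
  = Σ_{T ∈ 𝒜_M} (x₁y₁)^{oleaf} (x₂ + y₂)^{yleaf}`,
where `𝒜_M` is the set of trees in `𝒯_M` without young internal nodes.  Here
`x₁ = X 0`, `x₂ = X 1`, `y₁ = X 2`, `y₂ = X 3` in `ℤ[x₁,x₂,y₁,y₂]`. -/
theorem wit_tip_augmented_identity
    (M : Multiset ℕ) (hM : ∀ x ∈ M, 0 < x)
    (TM : Finset LTree) (hTM : ∀ T, T ∈ TM ↔ LTree.IsWIT M T) :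
    ∑ T ∈ TM,
        (X 0 : MvPolynomial (Fin 4) ℤ) ^ LTree.oleaf T * X 1 ^ LTree.yleaf T *
          X 2 ^ LTree.oint T * X 3 ^ LTree.yint T
      = ∑ T ∈ TM.filter (fun T => LTree.yint T = 0),
          (X 0 * X 2 : MvPolynomial (Fin 4) ℤ) ^ LTree.oleaf T *
            (X 1 + X 3) ^ LTree.yleaf T := by
  classical
  have hw : ∀ T : LTree, (X 0 : MvPolynomial (Fin 4) ℤ) ^ LTree.oleaf T * X 1 ^ LTree.yleaf T *
        X 2 ^ LTree.oint T * X 3 ^ LTree.yint T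
      = (X 0 * X 2 : MvPolynomial (Fin 4) ℤ) ^ LTree.olf T * LTree.Wt (X 1) (X 3) T := by
    intro T
    rw [LTree.oint_eq_oleaf, LTree.oleaf_eq_olf, LTree.Wt, mul_pow]
    ring
  rw [Finset.sum_congr rfl (fun T _ => hw T)]
  have hmaps : ∀ T ∈ TM, LTree.F T ∈ TM.filter (fun T => LTree.yint T = 0) := by
    intro T hT
    rw [Finset.mem_filter]
    refine ⟨(hTM _).2 ?_, LTree.yint_F T⟩
    have hW := (hTM _).1 hT
    rw [LTree.isWIT_iff] at hW ⊢
    exact ⟨by rw [LTree.F_label]; exact hW.1, by rw [LTree.F_labels]; exact hW.2.1,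
      LTree.F_good T hW.2.2⟩
  rw [← Finset.sum_fiberwise_of_maps_to hmaps
    (fun T => (X 0 * X 2 : MvPolynomial (Fin 4) ℤ) ^ LTree.olf T * LTree.Wt (X 1) (X 3) T)]
  apply Finset.sum_congr rfl
  intro A hA
  have hA' := Finset.mem_filter.1 hA
  have hWA : LTree.IsWIT M A := (hTM A).1 hA'.1
  have hA2 : LTree.yint A = 0 := hA'.2
  have hfib : TM.filter (fun T => LTree.F T = A) = (LTree.pre A).toFinset := by
    ext T
    rw [Finset.mem_filter, List.mem_toFinset, hTM]
    constructor
    · rintro ⟨hWT, rfl⟩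
      exact LTree.mem_pre_F T
    · intro hTpre
      obtain ⟨hl, hleaf, hlabels, holf, hFT, hGood⟩ := LTree.pre_spec A hA2 T hTpre
      refine ⟨?_, hFT⟩
      rw [LTree.isWIT_iff] at hWA ⊢
      exact ⟨by rw [hl]; exact hWA.1, by rw [hlabels]; exact hWA.2.1, hGood hWA.2.2⟩
  rw [Finset.sum_congr hfib (fun _ _ => rfl),
    List.sum_toFinset _ (LTree.nodup_pre A hA2)]
  have hptwise : (LTree.pre A).map
        (fun T => (X 0 * X 2 : MvPolynomial (Fin 4) ℤ) ^ LTree.olf T * LTree.Wt (X 1) (X 3) T)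
      = (LTree.pre A).map
        (fun T => (X 0 * X 2 : MvPolynomial (Fin 4) ℤ) ^ LTree.olf A * LTree.Wt (X 1) (X 3) T) := by
    apply List.map_congr_left
    intro T hT
    rw [(LTree.pre_spec A hA2 T hT).2.2.2.1]
  rw [hptwise, List.sum_map_mul_left, LTree.pre_sum (X 1) (X 3) A hA2, LTree.oleaf_eq_olf]
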